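/- Let h ≥ 2. If α > 0 is an additive eigenvalue of order h and 0 < β < α, then β is also an additive eigenvalue of order h. -/

import Mathlib

/-- `α` is an additive eigenvalue of order `h`: there is a strictly increasing sequence
of nonnegative integers forming an asymptotic basis of order `h` with `a_n ~ α n^h`. -/
def IsAdditiveEigenvalue (h : ℕ) (α : ℝ) : Prop :=
  ∃ a : ℕ → ℕ, StrictMono a ∧
    (∃ n₀ : ℕ, ∀ n : ℕ, n₀ ≤ n →
      ∃ c : Fin h → ℕ, (∀ i, c i ∈ Set.range a) ∧ ∑ i, c i = n) ∧
    Filter.Tendsto (fun n : ℕ => (a n : ℝ) / (α * (n : ℝ) ^ h)) Filter.atTop (nhds 1)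

open Filter

noncomputable def Tf (h : ℕ) (β : ℝ) (n : ℕ) : ℕ := ⌈β * (n : ℝ) ^ h⌉₊

noncomputable def bj (h : ℕ) (β : ℝ) (a : ℕ → ℕ) : ℕ → ℕ × ℕ
  | 0 => (a 0, 0)
  | n + 1 =>
    let p := bj h β a n
    let v := min (a (p.2 + 1)) (max (p.1 + 1) (Tf h β (n + 1)))
    (v, if v = a (p.2 + 1) then p.2 + 1 else p.2)

section basic
variable {h : ℕ} {β : ℝ} {a : ℕ → ℕ}

noncomputable def bb (h : ℕ) (β : ℝ) (a : ℕ → ℕ) (n : ℕ) : ℕ := (bj h β a n).1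
noncomputable def jj (h : ℕ) (β : ℝ) (a : ℕ → ℕ) (n : ℕ) : ℕ := (bj h β a n).2

lemma bb_zero : bb h β a 0 = a 0 := rfl
lemma jj_zero : jj h β a 0 = 0 := rfl

lemma bb_succ (n : ℕ) :
    bb h β a (n + 1)
      = min (a (jj h β a n + 1)) (max (bb h β a n + 1) (Tf h β (n + 1))) := rfl

lemma jj_succ (n : ℕ) :
    jj h β a (n + 1)
      = if bb h β a (n + 1) = a (jj h β a n + 1) then jj h β a n + 1 else jj h β a n := rfl

lemma inv (ha : StrictMono a) (n : ℕ) :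
    a (jj h β a n) ≤ bb h β a n ∧ bb h β a n < a (jj h β a n + 1) := by
  induction n with
  | zero => exact ⟨le_refl _, ha (Nat.lt_succ_self 0)⟩
  | succ n ih =>
    rcases ih with ⟨h1, h2⟩
    by_cases hc : bb h β a (n + 1) = a (jj h β a n + 1)
    · have hj : jj h β a (n + 1) = jj h β a n + 1 := by rw [jj_succ, if_pos hc]
      rw [hj, hc]
      exact ⟨le_refl _, ha (by omega)⟩
    · have hj : jj h β a (n + 1) = jj h β a n := by rw [jj_succ, if_neg hc]
      have hvle : bb h β a (n + 1) ≤ a (jj h β a n + 1) := by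
        rw [bb_succ]; exact min_le_left _ _
      have hlt : bb h β a n < bb h β a (n + 1) := by
        rw [bb_succ]
        exact lt_min h2 (lt_of_lt_of_le (Nat.lt_succ_self _) (le_max_left _ _))
      rw [hj]
      exact ⟨by omega, lt_of_le_of_ne hvle hc⟩

lemma bb_lt_succ (ha : StrictMono a) (n : ℕ) : bb h β a n < bb h β a (n + 1) := by
  have h2 := (inv (h := h) (β := β) (a := a) ha n).2
  rw [bb_succ]
  exact lt_min h2 (lt_of_lt_of_le (Nat.lt_succ_self _) (le_max_left _ _))

lemma bb_mono (ha : StrictMono a) : StrictMono (bb h β a) :=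
  strictMono_nat_of_lt_succ (bb_lt_succ ha)

lemma bb_succ_le (n : ℕ) :
    bb h β a (n + 1) ≤ max (bb h β a n + 1) (Tf h β (n + 1)) := by
  rw [bb_succ]; exact min_le_right _ _

lemma jj_le_succ (n : ℕ) : jj h β a n ≤ jj h β a (n + 1) := by
  rw [jj_succ]; split <;> omega

lemma jj_mono : Monotone (jj h β a) := monotone_nat_of_le_succ jj_le_succ

lemma deficit_step (n : ℕ) (hd : bb h β a (n + 1) < Tf h β (n + 1)) :
    bb h β a (n + 1) = a (jj h β a n + 1) ∧ jj h β a (n + 1) = jj h β a n + 1 := by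
  have he : bb h β a (n + 1) = a (jj h β a n + 1) := by
    rw [bb_succ] at hd ⊢
    rcases min_cases (a (jj h β a n + 1)) (max (bb h β a n + 1) (Tf h β (n + 1))) with
      ⟨he, _⟩ | ⟨he, _⟩
    · exact he
    · exfalso; rw [he] at hd; exact absurd (le_max_right _ _) (not_le.2 hd)
  exact ⟨he, by rw [jj_succ, if_pos he]⟩

lemma le_bb (ha : StrictMono a) (n : ℕ) : n ≤ bb h β a n := by
  induction n with
  | zero => exact Nat.zero_le _
  | succ n ih => have := bb_lt_succ (h := h) (β := β) (a := a) ha n; omega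

lemma range_subset (ha : StrictMono a) (k : ℕ) : ∃ n, bb h β a n = a k := by
  classical
  have hex : ∃ n, a k ≤ bb h β a n := ⟨a k, le_bb ha (a k)⟩
  have hn := Nat.find_spec hex
  cases hni : Nat.find hex with
  | zero =>
    rw [hni] at hn
    rw [bb_zero] at hn
    refine ⟨0, ?_⟩
    rw [bb_zero]
    have hk : k = 0 := by
      by_contra hk
      exact absurd hn (not_le.2 (ha (Nat.pos_of_ne_zero hk)))
    rw [hk]
  | succ i =>
    rw [hni] at hn
    have hi : ¬ a k ≤ bb h β a i := Nat.find_min hex (by rw [hni]; omega)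
    push_neg at hi
    have hji : jj h β a i < k := by
      have h1 := (inv (h := h) (β := β) (a := a) ha i).1
      exact ha.lt_iff_lt.mp (lt_of_le_of_lt h1 hi)
    have hle : bb h β a (i + 1) ≤ a k := by
      calc bb h β a (i + 1) ≤ a (jj h β a i + 1) := by rw [bb_succ]; exact min_le_left _ _
      _ ≤ a k := ha.monotone (by omega)
    exact ⟨i + 1, le_antisymm hle hn⟩

lemma stretch (ha : StrictMono a) {m n : ℕ} (hmn : m ≤ n)
    (hd : ∀ i, m < i → i ≤ n → bb h β a i < Tf h β i) :
    jj h β a n = jj h β a m + (n - m) ∧ (m < n → bb h β a n = a (jj h β a n)) := by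
  induction n with
  | zero =>
    have : m = 0 := Nat.le_zero.mp hmn
    subst this; exact ⟨by simp, by omega⟩
  | succ n ih =>
    rcases Nat.lt_or_ge m (n + 1) with hlt | hge
    · have hmn' : m ≤ n := by omega
      obtain ⟨ih1, _⟩ := ih hmn' (fun i hi1 hi2 => hd i hi1 (by omega))
      obtain ⟨he, hj⟩ := deficit_step (h := h) (β := β) n (hd (n + 1) hlt (le_refl _))
      constructor
      · rw [hj, ih1]; omega
      · intro _; rw [he, hj]
    · have : m = n + 1 := by omega
      subst this; exact ⟨by simp, by omega⟩

end basic

section analytic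
variable {h : ℕ} {β : ℝ} {a : ℕ → ℕ}

lemma Tf_ge (n : ℕ) : β * (n : ℝ) ^ h ≤ Tf h β n := Nat.le_ceil _

lemma Tf_lt (hβ : 0 < β) (n : ℕ) : (Tf h β n : ℝ) < β * (n : ℝ) ^ h + 1 :=
  Nat.ceil_lt_add_one (by positivity)

lemma pow_succ_ge (hh : 2 ≤ h) (n : ℕ) : n ^ h + 2 * n ^ (h - 1) ≤ (n + 1) ^ h := by
  obtain ⟨d, rfl⟩ : ∃ d, h = d + 2 := ⟨h - 2, by omega⟩
  have e1 : d + 2 - 1 = d + 1 := rfl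
  rw [e1]
  have h1 : n ^ d ≤ (n + 1) ^ d := Nat.pow_le_pow_left (by omega) d
  calc n ^ (d + 2) + 2 * n ^ (d + 1) = n ^ d * (n ^ 2 + 2 * n) := by ring
  _ ≤ (n + 1) ^ d * (n ^ 2 + 2 * n) := Nat.mul_le_mul_right _ h1
  _ ≤ (n + 1) ^ d * (n + 1) ^ 2 := Nat.mul_le_mul_left _ (by nlinarith)
  _ = (n + 1) ^ (d + 2) := by ring

lemma Tf_gap (hh : 2 ≤ h) (hβ : 0 < β) (E : ℕ) :
    ∃ N, ∀ n, N ≤ n → Tf h β n + E + 1 ≤ Tf h β (n + 1) := by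
  obtain ⟨N, hN⟩ : ∃ N : ℕ, ((E : ℝ) + 2) / (2 * β) ≤ N := ⟨⌈((E : ℝ) + 2) / (2 * β)⌉₊, Nat.le_ceil _⟩
  refine ⟨max N 1, fun n hn => ?_⟩
  have hn1 : 1 ≤ n := le_trans (le_max_right _ _) hn
  have hnN : (((E : ℝ) + 2) / (2 * β)) ≤ n := le_trans hN (by exact_mod_cast le_trans (le_max_left _ _) hn)
  have h2βn : (E : ℝ) + 2 ≤ 2 * β * n := by
    rw [div_le_iff₀ (by positivity)] at hnN; linarith
  have hpow : ((n : ℝ) + 1) ^ h ≥ (n : ℝ) ^ h + 2 * n := by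
    have := pow_succ_ge (h := h) hh n
    have hnh : (n : ℕ) ≤ n ^ (h - 1) := by
      calc n = n ^ 1 := (pow_one n).symm
      _ ≤ n ^ (h - 1) := Nat.pow_le_pow_right hn1 (by omega)
    have : (n : ℕ) ^ h + 2 * n ≤ (n + 1) ^ h := by omega
    exact_mod_cast this
  have key : (Tf h β n : ℝ) + E < Tf h β (n + 1) := by
    have h1 : (Tf h β n : ℝ) < β * n ^ h + 1 := Tf_lt hβ n
    have h2 : β * ((n : ℝ) + 1) ^ h ≤ Tf h β (n + 1) := by
      have := Tf_ge (h := h) (β := β) (n + 1); push_cast at this ⊢; linarith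
    have h3 : β * ((n : ℝ) + 1) ^ h ≥ β * n ^ h + 2 * β * n := by nlinarith
    linarith
  have : Tf h β n + E < Tf h β (n + 1) := by exact_mod_cast key
  omega

lemma eventually_le_Tf (ha : StrictMono a) (hh : 2 ≤ h) (hβ : 0 < β) :
    ∃ N, ∀ n, N ≤ n → bb h β a n ≤ Tf h β n := by
  obtain ⟨N₁, hN₁⟩ := Tf_gap (h := h) hh hβ 0
  set C := bb h β a N₁ with hC
  have hBd : ∀ n, N₁ ≤ n → bb h β a n ≤ Tf h β n + C := by
    intro n hn
    induction n, hn using Nat.le_induction with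
    | base => omega
    | succ n hn ih =>
      have h1 := bb_succ_le (h := h) (β := β) (a := a) n
      have h2 := hN₁ n hn
      exact le_trans h1 (max_le (by omega) (by omega))
  obtain ⟨N₂, hN₂⟩ := Tf_gap (h := h) (β := β) hh hβ C
  refine ⟨max N₁ N₂ + 1, fun n hn => ?_⟩
  obtain ⟨i, rfl⟩ : ∃ i, n = i + 1 := ⟨n - 1, by omega⟩
  have h1 := bb_succ_le (h := h) (β := β) (a := a) i
  have h2 : bb h β a i ≤ Tf h β i + C := hBd i (by omega)
  have h3 := hN₂ i (by omega)
  exact le_trans h1 (max_le (by omega) (le_refl _))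

end analytic

section limit
open Filter
variable {h : ℕ} {β α : ℝ} {a : ℕ → ℕ}

set_option maxHeartbeats 1000000 in
lemma bb_tendsto (ha : StrictMono a) (hh : 2 ≤ h) (hβ : 0 < β) (hβα : β < α)
    (hlim : Tendsto (fun k : ℕ => (a k : ℝ) / (α * (k : ℝ) ^ h)) atTop (nhds 1)) :
    Tendsto (fun n : ℕ => (bb h β a n : ℝ) / (β * (n : ℝ) ^ h)) atTop (nhds 1) := by
  classical
  have hα : 0 < α := lt_trans hβ hβα
  have hhne : h ≠ 0 := by omega
  have hβne : β ≠ 0 := ne_of_gt hβ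
  have hαne : α ≠ 0 := ne_of_gt hα
  have hhR : (2 : ℝ) ≤ h := by exact_mod_cast hh
  have hhRne : (h : ℝ) ≠ 0 := by positivity
  rw [Metric.tendsto_atTop]
  intro ε hε
  set ε₁ := min ε 1 with hε₁def
  have hε₁ : 0 < ε₁ := lt_min hε one_pos
  have hε₁ε : ε₁ ≤ ε := min_le_left _ _
  have hε₁1 : ε₁ ≤ 1 := min_le_right _ _
  -- δ
  set δ := ε₁ / (4 * h) with hδdef
  have hδpos : 0 < δ := by positivity
  have hδ8 : δ ≤ 1 / 8 := by
    rw [hδdef, div_le_div_iff₀ (by positivity) (by norm_num)]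
    linarith only [hε₁1, hhR]
  have hber : (1 : ℝ) - ε₁ / 4 ≤ (1 - δ) ^ h := by
    have hb := one_add_mul_le_pow (a := -δ) (by linarith only [hδ8]) h
    have he : (h : ℝ) * δ = ε₁ / 4 := by
      rw [hδdef]; field_simp
    have he2 : (1 : ℝ) + (h : ℝ) * (-δ) = 1 - ε₁ / 4 := by rw [mul_neg, he]; ring
    rw [he2] at hb
    have e2 : (1 : ℝ) + -δ = 1 - δ := by ring
    rw [e2] at hb
    exact hb
  -- θ
  set θ := (β / α) ^ ((h : ℝ)⁻¹) with hθdef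
  have hba : 0 < β / α := div_pos hβ hα
  have hθpos : 0 < θ := Real.rpow_pos_of_pos hba _
  have hθlt : θ < 1 :=
    Real.rpow_lt_one (le_of_lt hba) ((div_lt_one hα).2 hβα) (by positivity)
  have hθh : θ ^ h = β / α := Real.rpow_inv_natCast_pow (le_of_lt hba) hhne
  have h1θ : (0 : ℝ) < 1 - θ := by linarith only [hθlt]
  -- η
  set η := min (θ / 2) (min ((1 - θ) / 2) ((1 - θ) * δ / 4)) with hηdef
  have h1θδ : (0 : ℝ) < (1 - θ) * δ := mul_pos h1θ hδpos
  have hηpos : 0 < η := by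
    apply lt_min (by linarith only [hθpos])
    exact lt_min (by linarith only [h1θ]) (by linarith only [h1θδ])
  have hηθ : η ≤ θ / 2 := min_le_left _ _
  have hη1θ : η ≤ (1 - θ) / 2 := le_trans (min_le_right _ _) (min_le_left _ _)
  have hηδ : η ≤ (1 - θ) * δ / 4 := le_trans (min_le_right _ _) (min_le_right _ _)
  set δ₁ := θ + η with hδ₁def
  set δ₂ := θ - η with hδ₂def
  have hδ₁pos : 0 < δ₁ := by rw [hδ₁def]; linarith only [hθpos, hηpos]
  have hδ₂pos : 0 < δ₂ := by rw [hδ₂def]; linarith only [hθpos, hηθ]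
  have hδ₁lt1 : δ₁ < 1 := by rw [hδ₁def]; linarith only [hη1θ, hηpos]
  have hδ₁ne : δ₁ ≠ 0 := ne_of_gt hδ₁pos
  have hδ₂ne : δ₂ ≠ 0 := ne_of_gt hδ₂pos
  -- claim A constant
  have hd1h : β / α < δ₁ ^ h := by
    rw [← hθh]
    exact pow_lt_pow_left₀ (by rw [hδ₁def]; linarith only [hηpos]) (le_of_lt hθpos) hhne
  have hd1hpos : 0 < δ₁ ^ h := pow_pos hδ₁pos h
  have hc₁lt : β / (α * δ₁ ^ h) < 1 := by
    rw [div_lt_one (mul_pos hα hd1hpos)]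
    calc β = (β / α) * α := by field_simp
    _ < δ₁ ^ h * α := mul_lt_mul_of_pos_right hd1h hα
    _ = α * δ₁ ^ h := by ring
  have hAev : ∀ᶠ k : ℕ in atTop, (β / δ₁ ^ h) * (k : ℝ) ^ h < a k := by
    have h1 : ∀ᶠ k : ℕ in atTop, β / (α * δ₁ ^ h) < (a k : ℝ) / (α * (k : ℝ) ^ h) :=
      hlim.eventually (eventually_gt_nhds hc₁lt)
    filter_upwards [h1, eventually_ge_atTop 1] with k hk hk1
    have hkp : (0 : ℝ) < (k : ℝ) := by exact_mod_cast hk1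
    have hkpos : (0 : ℝ) < α * (k : ℝ) ^ h := mul_pos hα (pow_pos hkp h)
    rw [lt_div_iff₀ hkpos] at hk
    calc (β / δ₁ ^ h) * (k : ℝ) ^ h = β / (α * δ₁ ^ h) * (α * (k : ℝ) ^ h) := by
          field_simp
    _ < a k := hk
  obtain ⟨K, hK⟩ := eventually_atTop.1 hAev
  -- claim B constant
  have hd2h : δ₂ ^ h < β / α := by
    rw [← hθh]
    exact pow_lt_pow_left₀ (by rw [hδ₂def]; linarith only [hηpos]) (le_of_lt hδ₂pos) hhne
  have hd2hpos : 0 < δ₂ ^ h := pow_pos hδ₂pos h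
  have hc₂gt : 1 < β / (α * δ₂ ^ h) := by
    rw [lt_div_iff₀ (mul_pos hα hd2hpos)]
    calc 1 * (α * δ₂ ^ h) = δ₂ ^ h * α := by ring
    _ < (β / α) * α := mul_lt_mul_of_pos_right hd2h hα
    _ = β := by field_simp
  have hBev : ∀ᶠ k : ℕ in atTop, (a k : ℝ) < (β / δ₂ ^ h) * (k : ℝ) ^ h := by
    have h1 : ∀ᶠ k : ℕ in atTop, (a k : ℝ) / (α * (k : ℝ) ^ h) < β / (α * δ₂ ^ h) :=
      hlim.eventually (eventually_lt_nhds hc₂gt)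
    filter_upwards [h1, eventually_ge_atTop 1] with k hk hk1
    have hkp : (0 : ℝ) < (k : ℝ) := by exact_mod_cast hk1
    have hkpos : (0 : ℝ) < α * (k : ℝ) ^ h := mul_pos hα (pow_pos hkp h)
    rw [div_lt_iff₀ hkpos] at hk
    calc (a k : ℝ) < β / (α * δ₂ ^ h) * (α * (k : ℝ) ^ h) := hk
    _ = (β / δ₂ ^ h) * (k : ℝ) ^ h := by field_simp
  obtain ⟨K', hK'⟩ := eventually_atTop.1 hBev
  -- upper bound
  obtain ⟨Nu, hNu⟩ := eventually_le_Tf (h := h) (β := β) ha hh hβ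
  -- threshold N₃
  set M₀ := ⌈((a K' : ℝ)) / β⌉₊ + 1 with hM₀def
  set N₃ := max (a K) M₀ with hN₃def
  -- claim A as a local fact
  have claimA : ∀ n : ℕ, N₃ ≤ n → bb h β a n < Tf h β n →
      bb h β a n = a (jj h β a n) → (jj h β a n : ℝ) < δ₁ * n := by
    intro n hn hdef heq
    set k := jj h β a n with hkdef
    have hKk : K ≤ k := by
      have h1 : a K ≤ a k := by
        rw [← heq]
        calc a K ≤ N₃ := le_max_left _ _
        _ ≤ n := hn
        _ ≤ bb h β a n := le_bb ha n
      exact ha.le_iff_le.1 h1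
    have hak : (β / δ₁ ^ h) * (k : ℝ) ^ h < a k := hK k hKk
    have hble : (a k : ℝ) ≤ β * (n : ℝ) ^ h := by
      rw [← heq]
      have h1 : (Tf h β n : ℝ) < β * (n : ℝ) ^ h + 1 := Tf_lt hβ n
      have h2 : (bb h β a n : ℝ) + 1 ≤ Tf h β n := by exact_mod_cast hdef
      linarith only [h1, h2]
    have hlt2 : (β / δ₁ ^ h) * (k : ℝ) ^ h < β * (n : ℝ) ^ h := lt_of_lt_of_le hak hble
    have hlt3 : (β / δ₁ ^ h) * (k : ℝ) ^ h * (δ₁ ^ h / β) < β * (n : ℝ) ^ h * (δ₁ ^ h / β) :=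
      mul_lt_mul_of_pos_right hlt2 (div_pos hd1hpos hβ)
    have e1 : (β / δ₁ ^ h) * (k : ℝ) ^ h * (δ₁ ^ h / β) = (k : ℝ) ^ h := by
      field_simp
    have e2 : β * (n : ℝ) ^ h * (δ₁ ^ h / β) = (δ₁ * n) ^ h := by
      rw [mul_pow]; field_simp
    rw [e1, e2] at hlt3
    exact lt_of_pow_lt_pow_left₀ h (mul_nonneg hδ₁pos.le (Nat.cast_nonneg _)) hlt3
  -- claim B as a local fact
  have claimB : ∀ m : ℕ, N₃ ≤ m → Tf h β m ≤ bb h β a m →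
      δ₂ * (m : ℝ) < (jj h β a m : ℝ) + 1 := by
    intro m hm hcatch
    set k := jj h β a m + 1 with hkdef
    have hm1 : 1 ≤ m := le_trans (by omega : 1 ≤ M₀) (le_trans (le_max_right _ _) hm)
    have hmp : (1 : ℝ) ≤ (m : ℝ) := by exact_mod_cast hm1
    have hmh : (m : ℝ) ≤ (m : ℝ) ^ h := by
      calc (m : ℝ) = (m : ℝ) ^ 1 := (pow_one _).symm
      _ ≤ (m : ℝ) ^ h := pow_le_pow_right₀ hmp (by omega)
    have haK' : (a K' : ℝ) ≤ β * (m : ℝ) ^ h := by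
      have h1 : ((a K' : ℝ)) / β ≤ ⌈((a K' : ℝ)) / β⌉₊ := Nat.le_ceil _
      have h2 : (⌈((a K' : ℝ)) / β⌉₊ : ℝ) + 1 ≤ m := by
        have h2' : M₀ ≤ m := le_trans (le_max_right _ _) hm
        exact_mod_cast h2'
      rw [div_le_iff₀ hβ] at h1
      have h4 : (⌈((a K' : ℝ)) / β⌉₊ : ℝ) ≤ m := by linarith only [h2]
      have h5 : (⌈((a K' : ℝ)) / β⌉₊ : ℝ) * β ≤ (m : ℝ) * β :=
        mul_le_mul_of_nonneg_right h4 hβ.le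
      have h6 : β * (m : ℝ) ≤ β * (m : ℝ) ^ h := mul_le_mul_of_nonneg_left hmh hβ.le
      linarith only [h1, h5, h6]
    have hgt : β * (m : ℝ) ^ h < a k := by
      have h1 : bb h β a m < a k := (inv ha m).2
      have h2 : β * (m : ℝ) ^ h ≤ Tf h β m := Tf_ge m
      have h3 : (Tf h β m : ℝ) ≤ bb h β a m := by exact_mod_cast hcatch
      have h4 : (bb h β a m : ℝ) < a k := by exact_mod_cast h1
      linarith only [h1, h2, h3, h4]
    have hKk : K' ≤ k := by
      by_contra hlt
      push_neg at hlt
      have h7 : (a k : ℝ) ≤ a K' := by exact_mod_cast ha.monotone (le_of_lt hlt)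
      linarith only [hgt, haK', h7]
    have hak : (a k : ℝ) < (β / δ₂ ^ h) * (k : ℝ) ^ h := hK' k hKk
    have hlt2 : β * (m : ℝ) ^ h < (β / δ₂ ^ h) * (k : ℝ) ^ h := lt_trans hgt hak
    have hlt3 : β * (m : ℝ) ^ h * (δ₂ ^ h / β) < (β / δ₂ ^ h) * (k : ℝ) ^ h * (δ₂ ^ h / β) :=
      mul_lt_mul_of_pos_right hlt2 (div_pos hd2hpos hβ)
    have e1 : (β / δ₂ ^ h) * (k : ℝ) ^ h * (δ₂ ^ h / β) = (k : ℝ) ^ h := by field_simp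
    have e2 : β * (m : ℝ) ^ h * (δ₂ ^ h / β) = (δ₂ * m) ^ h := by
      rw [mul_pow]; field_simp
    rw [e1, e2] at hlt3
    have h8 : δ₂ * (m : ℝ) < k := lt_of_pow_lt_pow_left₀ h (Nat.cast_nonneg _) hlt3
    calc δ₂ * (m : ℝ) < (k : ℝ) := h8
    _ = (jj h β a m : ℝ) + 1 := by rw [hkdef]; push_cast; ring
  -- linear eventualities
  have htendn : Tendsto (fun n : ℕ => (n : ℝ)) atTop atTop := tendsto_natCast_atTop_atTop
  have hev1 : ∀ᶠ n : ℕ in atTop, (N₃ : ℝ) < (1 - δ₁) * n :=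
    (htendn.const_mul_atTop (by linarith only [hδ₁lt1])).eventually_gt_atTop _
  have hev2 : ∀ᶠ n : ℕ in atTop, (2 : ℝ) ≤ (1 - θ) * δ * n :=
    (htendn.const_mul_atTop h1θδ).eventually_ge_atTop _
  have hev3 : ∀ᶠ n : ℕ in atTop, (2 : ℝ) ≤ ε₁ * β * n :=
    (htendn.const_mul_atTop (mul_pos hε₁ hβ)).eventually_ge_atTop _
  -- main eventual bound
  rw [← Filter.eventually_atTop]
  filter_upwards [hev1, hev2, hev3, eventually_gt_atTop N₃, eventually_ge_atTop Nu,
    eventually_ge_atTop 1] with n hn1 hn2 hn3 hnN₃ hnNu hn4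
  have hnpos : (0 : ℝ) < (n : ℝ) := by exact_mod_cast hn4
  have hden : (0 : ℝ) < β * (n : ℝ) ^ h := mul_pos hβ (pow_pos hnpos h)
  have hnh : (n : ℝ) ≤ (n : ℝ) ^ h := by
    calc (n : ℝ) = (n : ℝ) ^ 1 := (pow_one _).symm
    _ ≤ (n : ℝ) ^ h := pow_le_pow_right₀ (by exact_mod_cast hn4) (by omega)
  -- lower bound : (1 - ε₁/2) * (β n^h) ≤ bb n
  have hlow : (1 - ε₁ / 2) * (β * (n : ℝ) ^ h) ≤ bb h β a n := by
    set P : ℕ → Prop := fun i => N₃ ≤ i ∧ Tf h β i ≤ bb h β a i with hPdef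
    have hex : ∃ i, N₃ ≤ i ∧ i ≤ n ∧ Tf h β i ≤ bb h β a i := by
      by_contra hno
      push_neg at hno
      have hdef : ∀ i, N₃ < i → i ≤ n → bb h β a i < Tf h β i := fun i hi1 hi2 =>
        hno i (le_of_lt hi1) hi2
      obtain ⟨hj, hbn⟩ := stretch (h := h) (β := β) ha (le_of_lt hnN₃) hdef
      have hbnA : bb h β a n = a (jj h β a n) := hbn hnN₃
      have hdefn : bb h β a n < Tf h β n := hno n (le_of_lt hnN₃) (le_refl n)
      have hjlt : (jj h β a n : ℝ) < δ₁ * n := claimA n (le_of_lt hnN₃) hdefn hbnA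
      have hjge : (n : ℝ) - N₃ ≤ jj h β a n := by
        have h1 : n - N₃ ≤ jj h β a n := by omega
        have h2 : ((n - N₃ : ℕ) : ℝ) = (n : ℝ) - N₃ := by
          rw [Nat.cast_sub (le_of_lt hnN₃)]
        calc (n : ℝ) - N₃ = ((n - N₃ : ℕ) : ℝ) := h2.symm
        _ ≤ jj h β a n := by exact_mod_cast h1
      linarith only [hjlt, hjge, hn1]
    obtain ⟨i₀, hi₀1, hi₀2, hi₀3⟩ := hex
    set m := Nat.findGreatest P n with hmdef
    have hPm : P m := Nat.findGreatest_spec hi₀2 ⟨hi₀1, hi₀3⟩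
    have hmn : m ≤ n := Nat.findGreatest_le n
    obtain ⟨hmN₃, hmc⟩ := hPm
    have hdef : ∀ i, m < i → i ≤ n → bb h β a i < Tf h β i := by
      intro i hi1 hi2
      have hng : ¬ (N₃ ≤ i ∧ Tf h β i ≤ bb h β a i) :=
        Nat.findGreatest_is_greatest (P := P) hi1 hi2
      push_neg at hng
      exact hng (le_trans hmN₃ (le_of_lt hi1))
    have hTm : β * (m : ℝ) ^ h ≤ bb h β a m := by
      have h1 : β * (m : ℝ) ^ h ≤ Tf h β m := Tf_ge m
      have h2 : (Tf h β m : ℝ) ≤ bb h β a m := by exact_mod_cast hmc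
      linarith only [h1, h2]
    have hbm : (bb h β a m : ℝ) ≤ bb h β a n := by
      exact_mod_cast (bb_mono (h := h) (β := β) ha).monotone hmn
    rcases eq_or_lt_of_le hmn with heq | hltmn
    · -- m = n : caught at n
      rw [heq] at hTm
      have h5 : (1 - ε₁ / 2) * (β * (n : ℝ) ^ h) ≤ 1 * (β * (n : ℝ) ^ h) :=
        mul_le_mul_of_nonneg_right (by linarith only [hε₁] : (1 : ℝ) - ε₁ / 2 ≤ 1) hden.le
      rw [heq] at hbm
      linarith only [h5, hTm, hbm]
    · -- m < n
      obtain ⟨hj, hbn⟩ := stretch (h := h) (β := β) ha hmn hdef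
      have hbnA : bb h β a n = a (jj h β a n) := hbn hltmn
      have hdefn : bb h β a n < Tf h β n := hdef n hltmn (le_refl n)
      have hjnlt : (jj h β a n : ℝ) < δ₁ * n := claimA n (le_trans hmN₃ hmn) hdefn hbnA
      have hjmgt : δ₂ * (m : ℝ) < (jj h β a m : ℝ) + 1 := claimB m hmN₃ hmc
      have hjeq : (jj h β a n : ℝ) = (jj h β a m : ℝ) + ((n : ℝ) - m) := by
        rw [hj, Nat.cast_add, Nat.cast_sub hmn]
      rw [hδ₁def] at hjnlt
      rw [hδ₂def] at hjmgt
      have hmr : (m : ℝ) ≤ n := by exact_mod_cast hmn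
      have hp1 : η * (n : ℝ) ≤ (1 - θ) * δ / 4 * n :=
        mul_le_mul_of_nonneg_right hηδ hnpos.le
      have hp3 : η * (m : ℝ) ≤ η * n := mul_le_mul_of_nonneg_left hmr hηpos.le
      have hkey : (1 - θ) * ((n : ℝ) - m) ≤ (1 - θ) * (δ * n) := by
        linarith only [hjeq, hjnlt, hjmgt, hp1, hp3, hn2]
      have hnm : (n : ℝ) - m ≤ δ * n := (mul_le_mul_iff_right₀ h1θ).mp hkey
      have hmge : (1 - δ) * (n : ℝ) ≤ m := by linarith only [hnm]
      have h1δ : (0 : ℝ) ≤ 1 - δ := by linarith only [hδ8]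
      have hpow : ((1 - δ) * (n : ℝ)) ^ h ≤ (m : ℝ) ^ h :=
        pow_le_pow_left₀ (mul_nonneg h1δ hnpos.le) hmge h
      have hchain : β * ((1 - δ) * (n : ℝ)) ^ h ≤ bb h β a n := by
        calc β * ((1 - δ) * (n : ℝ)) ^ h ≤ β * (m : ℝ) ^ h :=
              mul_le_mul_of_nonneg_left hpow hβ.le
        _ ≤ bb h β a m := hTm
        _ ≤ bb h β a n := hbm
      have hb2 : (1 : ℝ) - ε₁ / 2 ≤ (1 - δ) ^ h := by linarith only [hber, hε₁]
      have hfin : (1 - ε₁ / 2) * (β * (n : ℝ) ^ h) ≤ β * ((1 - δ) * (n : ℝ)) ^ h := by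
        calc (1 - ε₁ / 2) * (β * (n : ℝ) ^ h) ≤ (1 - δ) ^ h * (β * (n : ℝ) ^ h) :=
              mul_le_mul_of_nonneg_right hb2 hden.le
        _ = β * ((1 - δ) * (n : ℝ)) ^ h := by rw [mul_pow]; ring
      linarith only [hfin, hchain]
  -- upper bound
  have hup : (bb h β a n : ℝ) < β * (n : ℝ) ^ h + 1 := by
    have h1 : bb h β a n ≤ Tf h β n := hNu n hnNu
    have h2 : (Tf h β n : ℝ) < β * (n : ℝ) ^ h + 1 := Tf_lt hβ n
    have h3 : (bb h β a n : ℝ) ≤ Tf h β n := by exact_mod_cast h1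
    linarith only [h2, h3]
  -- conclude
  have hnhge : ε₁ * β * (n : ℝ) ≤ ε₁ * β * (n : ℝ) ^ h :=
    mul_le_mul_of_nonneg_left hnh (mul_pos hε₁ hβ).le
  have hinv : (1 : ℝ) ≤ ε₁ / 2 * (β * (n : ℝ) ^ h) := by
    linarith only [hn3, hnhge]
  rw [Real.dist_eq]
  have hxlo : 1 - ε₁ / 2 ≤ (bb h β a n : ℝ) / (β * (n : ℝ) ^ h) := by
    rw [le_div_iff₀ hden]; linarith only [hlow]
  have hxhi : (bb h β a n : ℝ) / (β * (n : ℝ) ^ h) ≤ 1 + ε₁ / 2 := by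
    rw [div_le_iff₀ hden]; linarith only [hup, hinv]
  have habs : |(bb h β a n : ℝ) / (β * (n : ℝ) ^ h) - 1| ≤ ε₁ / 2 :=
    abs_le.2 ⟨by linarith only [hxlo], by linarith only [hxhi]⟩
  calc |(bb h β a n : ℝ) / (β * (n : ℝ) ^ h) - 1| ≤ ε₁ / 2 := habs
  _ < ε := by linarith only [hε₁ε, hε₁]

end limit

/-- If `α` is an additive eigenvalue of order `h ≥ 2` and `0 < β < α`, then `β` is also
an additive eigenvalue of order `h`. -/
theorem stmt17 (h : ℕ) (hh : 2 ≤ h) (α β : ℝ)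
    (hα : IsAdditiveEigenvalue h α) (hβ : 0 < β) (hβα : β < α) :
    IsAdditiveEigenvalue h β := by
  obtain ⟨a, ha, ⟨n₀, hbasis⟩, hlim⟩ := hα
  refine ⟨bb h β a, bb_mono ha, ⟨n₀, ?_⟩, bb_tendsto ha hh hβ hβα hlim⟩
  intro n hn
  obtain ⟨c, hc, hsum⟩ := hbasis n hn
  refine ⟨c, fun i => ?_, hsum⟩
  obtain ⟨k, hk⟩ := hc i
  obtain ⟨n', hn'⟩ := range_subset (h := h) (β := β) ha k
  exact ⟨n', by rw [hn', hk]⟩
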